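/- Let L be a Dedekind complete Banach lattice, A the band generated by all atoms of L, and P_A the band projection onto A. For every positive operator T on L, the atomic diagonal D(T) = sup over finite sets F of pairwise disjoint norm-one atoms of Σ_{a∈F} P_a T P_a equals P_A ∘ 𝒫(T), where 𝒫 is the band projection of the regular operators onto the center Z(L). -/

import Mathlib

open Filter Topology

section Defs
variable {L : Type*} [NormedAddCommGroup L] [Lattice L] [HasSolidNorm L] [IsOrderedAddMonoid L] [NormedSpace ℝ L]

def IsOrderIdeal (J : Submodule ℝ L) : Prop :=
  ∀ x y : L, |x| ≤ |y| → y ∈ J → x ∈ J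

def InvariantUnder (T : L →L[ℝ] L) (J : Submodule ℝ L) : Prop :=
  ∀ x ∈ J, T x ∈ J

def PositiveOp (T : L →L[ℝ] L) : Prop := ∀ x : L, 0 ≤ x → 0 ≤ T x

def IdealReducible (F : Set (L →L[ℝ] L)) : Prop :=
  ∃ J : Submodule ℝ L, IsOrderIdeal J ∧ IsClosed (J : Set L) ∧ J ≠ ⊥ ∧ J ≠ ⊤ ∧
    ∀ T ∈ F, InvariantUnder T J

def ClosedIdealChain (C : Set (Submodule ℝ L)) : Prop :=
  IsChain (· ≤ ·) C ∧ ∀ J ∈ C, IsOrderIdeal J ∧ IsClosed (J : Set L)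

def IdealTriangularizable (F : Set (L →L[ℝ] L)) : Prop :=
  ∃ C : Set (Submodule ℝ L), ClosedIdealChain C ∧
    (∀ C' : Set (Submodule ℝ L), ClosedIdealChain C' → C ⊆ C' → C' = C) ∧
    ∀ J ∈ C, ∀ T ∈ F, InvariantUnder T J

def QuasiInterior (x : L) : Prop :=
  0 ≤ x ∧ Dense {y : L | ∃ lam : ℝ, 0 ≤ lam ∧ |y| ≤ lam • x}

def StrictlyPosFunctional (φ : L →L[ℝ] ℝ) : Prop :=
  (∀ x : L, 0 ≤ x → 0 ≤ φ x) ∧ ∀ x : L, 0 ≤ x → x ≠ 0 → 0 < φ x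

def StrictlyPosOp (T : L →L[ℝ] L) : Prop :=
  PositiveOp T ∧ ∀ x : L, T |x| = 0 → x = 0

def AdjointStrictlyPos (T : L →L[ℝ] L) : Prop :=
  ∀ ψ : L →L[ℝ] ℝ, (∀ x : L, 0 ≤ x → 0 ≤ ψ x) → ψ.comp T = 0 → ψ = 0

def IsLatAtom (a : L) : Prop :=
  0 ≤ a ∧ a ≠ 0 ∧ ∀ x : L, 0 ≤ x → x ≤ a → ∃ lam : ℝ, 0 ≤ lam ∧ x = lam • a

def Quasinilpotent (T : L →L[ℝ] L) : Prop :=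
  Tendsto (fun n : ℕ => ‖T ^ n‖ ^ ((1:ℝ) / n)) atTop (𝓝 0)

def PowerCompact (T : L →L[ℝ] L) : Prop :=
  ∃ k : ℕ, 0 < k ∧ IsCompactOperator (T ^ k : L →L[ℝ] L)

def OpLE (S T : L →L[ℝ] L) : Prop := ∀ x : L, 0 ≤ x → S x ≤ T x

def IsBand (B : Submodule ℝ L) : Prop :=
  IsOrderIdeal B ∧ ∀ A : Set L, A.Nonempty → A ⊆ B → ∀ x : L, IsLUB A x → x ∈ B

def IsBandProjection (P : L →L[ℝ] L) (B : Submodule ℝ L) : Prop :=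
  PositiveOp P ∧ P.comp P = P ∧ (∀ x : L, P x ∈ B) ∧ (∀ x ∈ B, P x = x) ∧
    ∀ x : L, ∀ b ∈ B, |x - P x| ⊓ |b| = 0

def IsAtomicBand (B : Submodule ℝ L) : Prop :=
  IsBand B ∧ (∀ a : L, IsLatAtom a → a ∈ B) ∧
    ∀ B' : Submodule ℝ L, IsBand B' → (∀ a : L, IsLatAtom a → a ∈ B') → B ≤ B'

def DedekindComplete (L : Type*) [NormedAddCommGroup L] [Lattice L] [HasSolidNorm L] [IsOrderedAddMonoid L] : Prop :=
  ∀ A : Set L, A.Nonempty → BddAbove A → ∃ x : L, IsLUB A x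

def OrderContinuousNorm (L : Type*) [NormedAddCommGroup L] [Lattice L] [HasSolidNorm L] [IsOrderedAddMonoid L] : Prop :=
  ∀ A : Set L, A.Nonempty → DirectedOn (· ≥ ·) A → IsGLB A 0 →
    ∀ ε : ℝ, 0 < ε → ∃ a ∈ A, ‖a‖ < ε

def MaxAtomFamily (𝒜 : Set L) : Prop :=
  (∀ a ∈ 𝒜, IsLatAtom a ∧ ‖a‖ = 1) ∧
  (∀ a ∈ 𝒜, ∀ b ∈ 𝒜, a ≠ b → a ⊓ b = 0) ∧
  ∀ c : L, IsLatAtom c → ∃ a ∈ 𝒜, ¬ (c ⊓ a = 0)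

def AtomicDiagOf (𝒜 : Set L) (Pa : L → (L →L[ℝ] L)) (T D : L →L[ℝ] L) : Prop :=
  (∀ F : Finset L, ↑F ⊆ 𝒜 → OpLE (∑ a ∈ F, (Pa a).comp (T.comp (Pa a))) D) ∧
  ∀ U : L →L[ℝ] L,
    (∀ F : Finset L, ↑F ⊆ 𝒜 → OpLE (∑ a ∈ F, (Pa a).comp (T.comp (Pa a))) U) → OpLE D U

def SchepSet (T : L →L[ℝ] L) : Set (L →L[ℝ] L) :=
  {S | ∃ (m : ℕ) (P : Fin m → (L →L[ℝ] L)) (B : Fin m → Submodule ℝ L),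
    (∀ i, IsBand (B i) ∧ IsBandProjection (P i) (B i)) ∧ (∑ i, P i = 1) ∧
    S = ∑ i, (P i).comp (T.comp (P i))}

def CentralPartOf (T PT : L →L[ℝ] L) : Prop :=
  PositiveOp PT ∧ (∀ S ∈ SchepSet T, OpLE PT S) ∧
    ∀ U : L →L[ℝ] L, PositiveOp U → (∀ S ∈ SchepSet T, OpLE U S) → OpLE U PT

end Defs

section Helpers
variable {L : Type*} [NormedAddCommGroup L] [Lattice L] [HasSolidNorm L] [IsOrderedAddMonoid L] [NormedSpace ℝ L]

lemma negPart_le_abs' (a : L) : a⁻ ≤ |a| := by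
  rw [← posPart_add_negPart]
  exact le_add_of_nonneg_left (posPart_nonneg a)

lemma posPart_le_abs' (a : L) : a⁺ ≤ |a| := by
  rw [← posPart_add_negPart]
  exact le_add_of_nonneg_right (negPart_nonneg a)

lemma abs_eq_zero'' {x : L} (h : |x| = 0) : x = 0 :=
  le_antisymm ((le_abs_self x).trans h.le) (neg_nonpos.mp ((neg_le_abs x).trans h.le))

lemma add_inf_le' {u v w : L} (hv : 0 ≤ v) (huw : 0 ≤ u ⊓ w) :
    (u + v) ⊓ w ≤ u ⊓ w + v ⊓ w := by
  rw [← sub_le_iff_le_add']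
  refine le_inf ?_ ((sub_le_self _ huw).trans inf_le_right)
  calc (u + v) ⊓ w - u ⊓ w = ((u + v) ⊓ w - u) ⊔ ((u + v) ⊓ w - w) := sub_inf _ _ _
    _ ≤ v := sup_le (sub_le_iff_le_add'.mpr inf_le_left)
        ((sub_nonpos.mpr inf_le_right).trans hv)

lemma nsmul_pos_cancel {y : L} {n : ℕ} (hn : 0 < n) (h : 0 ≤ n • y) : 0 ≤ y := by
  obtain ⟨m, rfl⟩ : ∃ m, n = m + 1 := ⟨n - 1, by omega⟩
  have hneg : -y ≤ m • y := by
    rw [succ_nsmul'] at h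
    simpa using add_le_add_left h (-y)
  have hy1 : y ≤ y⁺ := by rw [posPart_def]; exact le_sup_left
  have h1 : y⁻ ≤ m • y⁺ := by
    rw [negPart_def]
    exact sup_le (hneg.trans (nsmul_le_nsmul_right hy1 m)) (nsmul_nonneg (posPart_nonneg y) m)
  have h2 : ∀ k : ℕ, y⁻ ⊓ (k • y⁺) = 0 := by
    intro k; induction k with
    | zero => simp [zero_nsmul, inf_eq_right.mpr (negPart_nonneg y)]
    | succ k ih =>
      have hle : (y⁺ + k • y⁺) ⊓ y⁻ ≤ y⁺ ⊓ y⁻ + (k • y⁺) ⊓ y⁻ :=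
        add_inf_le' (nsmul_nonneg (posPart_nonneg y) k)
          (le_inf (posPart_nonneg y) (negPart_nonneg y))
      rw [posPart_inf_negPart_eq_zero, zero_add, inf_comm (k • y⁺) y⁻, ih] at hle
      have hge : 0 ≤ (y⁺ + k • y⁺) ⊓ y⁻ :=
        le_inf (add_nonneg (posPart_nonneg y) (nsmul_nonneg (posPart_nonneg y) k))
          (negPart_nonneg y)
      rw [succ_nsmul' y⁺ k, inf_comm y⁻ (y⁺ + k • y⁺)]
      exact le_antisymm hle hge
  have h3 : y⁻ = 0 := by
    have := inf_eq_left.mpr h1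
    rw [h2 m] at this
    exact this.symm
  exact negPart_eq_zero.mp h3

lemma rat_smul_nonneg {q : ℚ} (hq : 0 ≤ q) {x : L} (hx : 0 ≤ x) : 0 ≤ (q : ℝ) • x := by
  refine nsmul_pos_cancel q.den_pos ?_
  have h1 : (q.den : ℕ) • ((q:ℝ) • x) = ((q.den : ℝ) * (q:ℝ)) • x := by
    rw [← Nat.cast_smul_eq_nsmul ℝ, smul_smul]
  have h3 : ((q.den : ℚ)) * q = (q.num : ℚ) := by rw [mul_comm, Rat.mul_den_eq_num]
  have h2 : (q.den : ℝ) * (q:ℝ) = ((q.num.toNat : ℕ) : ℝ) := by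
    rw [show ((q.num.toNat : ℕ) : ℝ) = ((q.num : ℤ) : ℝ) by
      exact_mod_cast congrArg (fun k : ℤ => (k : ℝ)) (Int.toNat_of_nonneg (Rat.num_nonneg.mpr hq))]
    exact_mod_cast h3
  rw [h1, h2, Nat.cast_smul_eq_nsmul]
  exact nsmul_nonneg hx _

lemma real_smul_nonneg {c : ℝ} (hc : 0 ≤ c) {x : L} (hx : 0 ≤ x) : 0 ≤ c • x := by
  have H : ∀ n : ℕ, ∃ q : ℚ, c < (q:ℝ) ∧ (q:ℝ) < c + 1/((n:ℝ)+1) := by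
    intro n
    exact_mod_cast exists_rat_btwn (lt_add_of_pos_right c (by positivity))
  choose q hq1 hq2 using H
  have hq0 : ∀ n, 0 ≤ (q n : ℝ) • x := fun n =>
    rat_smul_nonneg (Rat.cast_nonneg.mp (hc.trans (hq1 n).le)) hx
  have hconv : Tendsto (fun n => (q n : ℝ)) atTop (𝓝 c) := by
    refine tendsto_of_tendsto_of_tendsto_of_le_of_le (g := fun _ : ℕ => c)
      (h := fun n : ℕ => c + 1/((n:ℝ)+1)) tendsto_const_nhds ?_
      (fun n => (hq1 n).le) (fun n => (hq2 n).le)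
    have := tendsto_one_div_add_atTop_nhds_zero_nat (𝕜 := ℝ)
    simpa using tendsto_const_nhds.add this
  have hlim : Tendsto (fun n => (q n : ℝ) • x) atTop (𝓝 (c • x)) := hconv.smul_const x
  have hcl : IsClosed {y : L | 0 ≤ y} := isClosed_le continuous_const continuous_id
  exact hcl.mem_of_tendsto hlim (Filter.Eventually.of_forall hq0)

lemma real_smul_mono {c : ℝ} (hc : 0 ≤ c) {x y : L} (h : x ≤ y) : c • x ≤ c • y := by
  have := real_smul_nonneg hc (sub_nonneg.mpr h)
  rw [smul_sub] at this
  exact sub_nonneg.mp this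

lemma smul_inf' {c : ℝ} (hc : 0 ≤ c) (x y : L) : c • (x ⊓ y) = (c • x) ⊓ (c • y) := by
  rcases hc.eq_or_lt with rfl | hc'
  · simp
  · refine le_antisymm (le_inf (real_smul_mono hc inf_le_left) (real_smul_mono hc inf_le_right)) ?_
    have h2 : c⁻¹ • ((c • x) ⊓ (c • y)) ≤ x ⊓ y := by
      refine le_inf ?_ ?_
      · calc c⁻¹ • ((c • x) ⊓ (c • y)) ≤ c⁻¹ • (c • x) :=
            real_smul_mono (inv_nonneg.mpr hc) inf_le_left
          _ = x := inv_smul_smul₀ hc'.ne' x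
      · calc c⁻¹ • ((c • x) ⊓ (c • y)) ≤ c⁻¹ • (c • y) :=
            real_smul_mono (inv_nonneg.mpr hc) inf_le_right
          _ = y := inv_smul_smul₀ hc'.ne' y
    calc (c • x) ⊓ (c • y) = c • (c⁻¹ • ((c • x) ⊓ (c • y))) := (smul_inv_smul₀ hc'.ne' _).symm
      _ ≤ c • (x ⊓ y) := real_smul_mono hc h2

lemma inf_smul_zero {u w : L} (hu : 0 ≤ u) (hw : 0 ≤ w) (h : u ⊓ w = 0)
    {c : ℝ} (hc : 0 ≤ c) : (c • u) ⊓ w = 0 := by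
  have hge : 0 ≤ (c • u) ⊓ w := le_inf (real_smul_nonneg hc hu) hw
  rcases le_total c 1 with h1 | h1
  · refine le_antisymm ?_ hge
    have hcu : c • u ≤ u := by
      have := real_smul_nonneg (sub_nonneg.mpr h1) hu
      rw [sub_smul, one_smul] at this
      exact sub_nonneg.mp this
    calc (c • u) ⊓ w ≤ u ⊓ w := inf_le_inf_right w hcu
      _ = 0 := h
  · refine le_antisymm ?_ hge
    have hcw : w ≤ c • w := by
      have := real_smul_nonneg (sub_nonneg.mpr h1) hw
      rw [sub_smul, one_smul] at this
      exact sub_nonneg.mp this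
    calc (c • u) ⊓ w ≤ (c • u) ⊓ (c • w) := inf_le_inf_left _ hcw
      _ = c • (u ⊓ w) := (smul_inf' (hc) u w).symm
      _ = 0 := by rw [h, smul_zero]

lemma disj_decomp_abs {u v : L} (hu : 0 ≤ u) (hv : 0 ≤ v) (h : u ⊓ v = 0) :
    |u - v| = u + v := by
  have h1 : (u - v)⁺ = u := by
    rw [posPart_def, sup_comm]
    calc (0 : L) ⊔ (u - v) = (u - u) ⊔ (u - v) := by rw [sub_self]
      _ = u - u ⊓ v := (sub_inf u v u).symm
      _ = u := by rw [h, sub_zero]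
  have h2 : (u - v)⁻ = v := by
    rw [negPart_def, neg_sub, sup_comm]
    calc (0 : L) ⊔ (v - u) = (v - v) ⊔ (v - u) := by rw [sub_self]
      _ = v - v ⊓ u := (sub_inf v u v).symm
      _ = v := by rw [inf_comm, h, sub_zero]
  rw [← posPart_add_negPart (u - v), h1, h2]

lemma abs_real_smul (c : ℝ) (x : L) : |c • x| = |c| • |x| := by
  have key : ∀ d : ℝ, 0 ≤ d → ∀ y : L, |d • y| = d • |y| := by
    intro d hd y
    have hdec : d • y = d • y⁺ - d • y⁻ := by
      rw [← smul_sub, posPart_sub_negPart]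
    have hdisj : (d • y⁺) ⊓ (d • y⁻) = 0 := by
      rw [← smul_inf' hd, posPart_inf_negPart_eq_zero, smul_zero]
    rw [hdec, disj_decomp_abs (real_smul_nonneg hd (posPart_nonneg y))
      (real_smul_nonneg hd (negPart_nonneg y)) hdisj, ← smul_add, posPart_add_negPart,
]
  rcases le_total 0 c with hc | hc
  · rw [key c hc x, abs_of_nonneg hc]
  · have : c • x = (-c) • (-x) := by rw [neg_smul_neg]
    rw [this, key (-c) (neg_nonneg.mpr hc) (-x), abs_neg, abs_of_nonpos hc]

end Helpers

section BP
variable {L : Type*} [NormedAddCommGroup L] [Lattice L] [HasSolidNorm L] [IsOrderedAddMonoid L] [NormedSpace ℝ L]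

lemma posOp_mono {R : L →L[ℝ] L} (hR : PositiveOp R) {x y : L} (h : x ≤ y) : R x ≤ R y := by
  have := hR _ (sub_nonneg.mpr h)
  rw [map_sub] at this
  exact sub_nonneg.mp this

lemma bp_le {P : L →L[ℝ] L} {B : Submodule ℝ L} (hP : IsBandProjection P B)
    {x : L} (hx : 0 ≤ x) : P x ≤ x := by
  have h0 : 0 ≤ P x := hP.1 x hx
  have hd : |x - P x| ⊓ |P x| = 0 := hP.2.2.2.2 x (P x) (hP.2.2.1 x)
  have hv : -(x - P x) ≤ P x := by
    have h' : 0 ≤ P x + (x - P x) := by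
      rw [show P x + (x - P x) = x by abel]; exact hx
    simpa using add_le_add_left h' (-(x - P x))
  have h2 : (x - P x)⁻ ≤ |x - P x| ⊓ |P x| := by
    refine le_inf (negPart_le_abs' _) ?_
    rw [abs_of_nonneg h0, negPart_def]
    exact sup_le hv h0
  rw [hd] at h2
  have h3 : (x - P x)⁻ = 0 := le_antisymm h2 (negPart_nonneg _)
  have := negPart_eq_zero.mp h3
  exact sub_nonneg.mp (by simpa using this)

lemma bp_apply_eq {P : L →L[ℝ] L} {B : Submodule ℝ L} (hP : IsBandProjection P B)
    (x : L) : P (P x) = P x := by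
  have := hP.2.1
  exact DFunLike.congr_fun this x

lemma proj_repr {a : L} (ha : 0 ≤ a) {P : L →L[ℝ] L}
    (hP : IsBandProjection P (Submodule.span ℝ {a})) {x : L} (hx : 0 ≤ x) :
    ∃ μ : ℝ, 0 ≤ μ ∧ P x = μ • a := by
  obtain ⟨μ, hμ⟩ := Submodule.mem_span_singleton.mp (hP.2.2.1 x)
  have h0 : 0 ≤ P x := hP.1 x hx
  rcases le_or_gt 0 μ with hμ0 | hμ0
  · exact ⟨μ, hμ0, hμ.symm⟩
  · have h2 : 0 ≤ (-μ) • a := real_smul_nonneg (by linarith) ha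
    have h3 : P x ≤ 0 := by
      rw [← hμ, show μ • a = -((-μ) • a) by rw [neg_smul, neg_neg]]
      exact neg_nonpos.mpr h2
    exact ⟨0, le_refl 0, by rw [le_antisymm h3 h0, zero_smul]⟩

lemma bp_ann {a : L} (ha : 0 ≤ a) {P : L →L[ℝ] L}
    (hP : IsBandProjection P (Submodule.span ℝ {a})) {y : L} (hy : |y| ⊓ a = 0) :
    P y = 0 := by
  have key : ∀ z : L, 0 ≤ z → z ⊓ a = 0 → P z = 0 := by
    intro z hz0 hza
    obtain ⟨μ, hμ0, hμ⟩ := proj_repr ha hP hz0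
    have hle : P z ≤ z := bp_le hP hz0
    have hd : (μ • a) ⊓ z = 0 := inf_smul_zero ha hz0 (by rw [inf_comm]; exact hza) hμ0
    have hPz : P z = (μ • a) ⊓ z := by rw [← hμ]; exact (inf_eq_left.mpr hle).symm
    rw [hPz, hd]
  have h1 : y⁺ ⊓ a = 0 := le_antisymm
    ((inf_le_inf_right a (posPart_le_abs' y)).trans hy.le)
    (le_inf (posPart_nonneg y) ha)
  have h2 : y⁻ ⊓ a = 0 := le_antisymm
    ((inf_le_inf_right a (negPart_le_abs' y)).trans hy.le)
    (le_inf (negPart_nonneg y) ha)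
  have : P y = P y⁺ - P y⁻ := by rw [← map_sub, posPart_sub_negPart]
  rw [this, key _ (posPart_nonneg y) h1, key _ (negPart_nonneg y) h2, sub_zero]

/-- The disjoint complement of a set, as a submodule. -/
def dSet (S : Set L) : Submodule ℝ L where
  carrier := {x | ∀ s ∈ S, |x| ⊓ |s| = 0}
  zero_mem' := by
    intro s hs
    simp only [abs_zero]
    exact inf_eq_left.mpr (abs_nonneg s)
  add_mem' := by
    intro x y hx hy s hs
    refine le_antisymm ?_ (le_inf (abs_nonneg _) (abs_nonneg _))
    calc |x + y| ⊓ |s| ≤ (|x| + |y|) ⊓ |s| := inf_le_inf_right _ (abs_add_le x y)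
      _ ≤ |x| ⊓ |s| + |y| ⊓ |s| :=
          add_inf_le' (abs_nonneg y) (le_inf (abs_nonneg x) (abs_nonneg s))
      _ = 0 := by rw [hx s hs, hy s hs, add_zero]
  smul_mem' := by
    intro c x hx s hs
    rw [abs_real_smul]
    exact inf_smul_zero (abs_nonneg x) (abs_nonneg s) (hx s hs) (abs_nonneg c)

lemma mem_dSet {S : Set L} {x : L} : x ∈ dSet S ↔ ∀ s ∈ S, |x| ⊓ |s| = 0 := Iff.rfl

lemma dSet_isBand (S : Set L) : IsBand (dSet (L := L) S) := by
  constructor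
  · intro x y hxy hy s hs
    exact le_antisymm ((inf_le_inf_right _ hxy).trans (hy s hs).le)
      (le_inf (abs_nonneg _) (abs_nonneg _))
  · intro A' hne hsub x hx
    obtain ⟨a0, ha0⟩ := hne
    have hz0 : 0 ≤ x - a0 := sub_nonneg.mpr (hx.1 ha0)
    have hU : ∀ y ∈ A', (y ⊔ a0 - a0) ∈ dSet S := by
      intro y hy
      have h1 : (y ⊔ a0) ∈ dSet S := by
        intro s hs
        refine le_antisymm ?_ (le_inf (abs_nonneg _) (abs_nonneg _))
        calc |y ⊔ a0| ⊓ |s| ≤ (|y| + |a0|) ⊓ |s| := by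
              refine inf_le_inf_right _ ?_
              have hub : y ⊔ a0 ≤ |y| + |a0| :=
                sup_le ((le_abs_self y).trans (le_add_of_nonneg_right (abs_nonneg a0)))
                  ((le_abs_self a0).trans (le_add_of_nonneg_left (abs_nonneg y)))
              have hlb : -(y ⊔ a0) ≤ |y| + |a0| := by
                rw [neg_sup]
                exact inf_le_of_left_le ((neg_le_abs y).trans
                  (le_add_of_nonneg_right (abs_nonneg a0)))
              exact abs_le'.mpr ⟨hub, hlb⟩
          _ ≤ |y| ⊓ |s| + |a0| ⊓ |s| :=
              add_inf_le' (abs_nonneg a0) (le_inf (abs_nonneg y) (abs_nonneg s))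
          _ = 0 := by rw [hsub hy s hs, hsub ha0 s hs, add_zero]
      exact Submodule.sub_mem _ h1 (hsub ha0)
    have key : ∀ s ∈ S, (x - a0) ⊓ |s| = 0 := by
      intro s hs
      set w := (x - a0) ⊓ |s| with hw
      have hw0 : 0 ≤ w := le_inf hz0 (abs_nonneg s)
      have hub : ∀ y ∈ A', (y ⊔ a0 - a0) + w ≤ x - a0 := by
        intro y hy
        have hu0 : 0 ≤ y ⊔ a0 - a0 := sub_nonneg.mpr le_sup_right
        have huw : (y ⊔ a0 - a0) ⊓ w = 0 := by
          refine le_antisymm ?_ (le_inf hu0 hw0)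
          calc (y ⊔ a0 - a0) ⊓ w ≤ (y ⊔ a0 - a0) ⊓ |s| :=
                inf_le_inf_left _ inf_le_right
            _ = |y ⊔ a0 - a0| ⊓ |s| := by rw [abs_of_nonneg hu0]
            _ = 0 := hU y hy s hs
        have : (y ⊔ a0 - a0) + w = (y ⊔ a0 - a0) ⊔ w := by
          rw [← inf_add_sup, huw, zero_add]
        rw [this]
        refine sup_le ?_ inf_le_left
        exact sub_le_sub_right (sup_le (hx.1 hy) (hx.1 ha0)) a0
      have hub2 : x ≤ (x - a0 - w) + a0 := by
        refine hx.2 ?_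
        intro y hy
        calc y ≤ y ⊔ a0 := le_sup_left
          _ = (y ⊔ a0 - a0) + a0 := by abel
          _ ≤ (x - a0 - w) + a0 := by
              refine add_le_add_left ?_ a0
              exact le_sub_iff_add_le.mpr (hub y hy)
      have hx' : x ≤ x - w := by
        calc x ≤ (x - a0 - w) + a0 := hub2
          _ = x - w := by abel
      have hw1 : x + w ≤ x := le_sub_iff_add_le.mp hx'
      exact le_antisymm ((add_le_iff_nonpos_right x).mp hw1) hw0
    intro s hs
    refine le_antisymm ?_ (le_inf (abs_nonneg _) (abs_nonneg _))
    calc |x| ⊓ |s| ≤ (|a0| + (x - a0)) ⊓ |s| := by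
          refine inf_le_inf_right _ ?_
          calc |x| = |a0 + (x - a0)| := by rw [show a0 + (x - a0) = x from by abel]
            _ ≤ |a0| + |x - a0| := abs_add_le _ _
            _ = |a0| + (x - a0) := by rw [abs_of_nonneg hz0]
      _ ≤ |a0| ⊓ |s| + (x - a0) ⊓ |s| :=
          add_inf_le' hz0 (le_inf (abs_nonneg a0) (abs_nonneg s))
      _ = 0 := by rw [hsub ha0 s hs, key s hs, add_zero]

lemma atom_comp {a : L} (ha : IsLatAtom a) {Q : L →L[ℝ] L} (hQ : PositiveOp Q)
    (hle : ∀ y : L, 0 ≤ y → Q y ≤ y) (hQQ : Q.comp Q = Q) : Q a = a ∨ Q a = 0 := by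
  obtain ⟨lam, hlam0, hlam⟩ := ha.2.2 (Q a) (hQ a ha.1) (hle a ha.1)
  have hQQ' : Q (Q a) = Q a := DFunLike.congr_fun hQQ a
  rw [hlam, map_smul, hlam, smul_smul] at hQQ'
  have h2 : (lam * lam - lam) • a = 0 := by rw [sub_smul]; rw [hQQ']; abel
  rcases smul_eq_zero.mp h2 with h | h
  · have : lam * (lam - 1) = 0 := by ring_nf; ring_nf at h; linarith
    rcases mul_eq_zero.mp this with h' | h'
    · right; rw [hlam, h', zero_smul]
    · left; rw [hlam, show lam = 1 by linarith, one_smul]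
  · exact absurd h ha.2.1

/-- Complement of a band projection onto the span of `a` is a band projection onto `dSet {a}`. -/
lemma bp_compl {a : L} (ha : IsLatAtom a) {P : L →L[ℝ] L}
    (hP : IsBandProjection P (Submodule.span ℝ {a})) :
    IsBandProjection (1 - P) (dSet {a}) := by
  have habs : |a| = a := abs_of_nonneg ha.1
  refine ⟨?_, ?_, ?_, ?_, ?_⟩
  · intro x hx
    have := bp_le hP hx
    simp only [ContinuousLinearMap.sub_apply, ContinuousLinearMap.one_apply]
    exact sub_nonneg.mpr this
  · ext x
    have hPP := bp_apply_eq hP x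
    simp [ContinuousLinearMap.comp_apply, ContinuousLinearMap.sub_apply,
      ContinuousLinearMap.one_apply, map_sub, hPP]
  · intro x s hs
    have hs' : s = a := hs
    rw [hs']
    simp only [ContinuousLinearMap.sub_apply, ContinuousLinearMap.one_apply]
    exact hP.2.2.2.2 x a (Submodule.mem_span_singleton_self a)
  · intro x hx
    have h0 : P x = 0 := bp_ann ha.1 hP (by rw [← habs]; exact hx a rfl)
    simp [ContinuousLinearMap.sub_apply, ContinuousLinearMap.one_apply, h0]
  · intro x b hb
    have hx' : x - (1 - P) x = P x := by
      simp [ContinuousLinearMap.sub_apply, ContinuousLinearMap.one_apply]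
    rw [hx']
    obtain ⟨μ, hμ⟩ := Submodule.mem_span_singleton.mp (hP.2.2.1 x)
    rw [← hμ, abs_real_smul, habs]
    have hba : |b| ⊓ a = 0 := by rw [← habs]; exact hb a rfl
    rw [inf_comm] at hba
    exact inf_smul_zero ha.1 (abs_nonneg b) hba (abs_nonneg μ)

/-- A band projection onto the span of an atom is also a band projection onto the
double disjoint complement. -/
lemma bp_dd {a : L} (ha : IsLatAtom a) {P : L →L[ℝ] L}
    (hP : IsBandProjection P (Submodule.span ℝ {a})) :
    IsBandProjection P (dSet (↑(dSet {a}) : Set L)) := by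
  have habs : |a| = a := abs_of_nonneg ha.1
  have hrange : ∀ x : L, P x ∈ dSet (↑(dSet {a}) : Set L) := by
    intro x s hs
    obtain ⟨μ, hμ⟩ := Submodule.mem_span_singleton.mp (hP.2.2.1 x)
    rw [← hμ, abs_real_smul, habs]
    have hsa : |s| ⊓ a = 0 := by rw [← habs]; exact hs a rfl
    rw [inf_comm] at hsa
    exact inf_smul_zero ha.1 (abs_nonneg s) hsa (abs_nonneg μ)
  have hmemd : ∀ x : L, (x - P x) ∈ dSet ({a} : Set L) := by
    intro x s hs
    have hs' : s = a := hs
    rw [hs']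
    exact hP.2.2.2.2 x a (Submodule.mem_span_singleton_self a)
  refine ⟨hP.1, hP.2.1, hrange, ?_, ?_⟩
  · intro x hx
    have h1 : (x - P x) ∈ dSet (↑(dSet {a}) : Set L) :=
      Submodule.sub_mem _ hx (hrange x)
    have h2 : |x - P x| ⊓ |x - P x| = 0 := h1 (x - P x) (hmemd x)
    rw [inf_idem] at h2
    exact (sub_eq_zero.mp (abs_eq_zero'' h2)).symm
  · intro x b hb
    rw [inf_comm]
    exact hb (x - P x) (hmemd x)

lemma posOp_sum {F : Finset L} {Pa : L → (L →L[ℝ] L)} {T : L →L[ℝ] L}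
    (hT : PositiveOp T) (hPa : ∀ a ∈ F, PositiveOp (Pa a)) :
    PositiveOp (∑ a ∈ F, (Pa a).comp (T.comp (Pa a))) := by
  intro x hx
  rw [ContinuousLinearMap.sum_apply]
  refine Finset.sum_nonneg fun a ha => ?_
  simp only [ContinuousLinearMap.comp_apply]
  exact hPa a ha _ (hT _ (hPa a ha _ hx))

lemma schep_mem {a : L} (ha : IsLatAtom a) {P : L →L[ℝ] L}
    (hP : IsBandProjection P (Submodule.span ℝ {a})) (T : L →L[ℝ] L) :
    P.comp (T.comp P) + (1 - P).comp (T.comp (1 - P)) ∈ SchepSet T := by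
  refine ⟨2, ![P, 1 - P], ![dSet (↑(dSet {a}) : Set L), dSet {a}], ?_, ?_, ?_⟩
  · intro i
    fin_cases i
    · exact ⟨dSet_isBand _, bp_dd ha hP⟩
    · exact ⟨dSet_isBand _, bp_compl ha hP⟩
  · simp [Fin.sum_univ_two]
  · simp [Fin.sum_univ_two]

/-- Sum of components on disjoint atoms is dominated by the identity. -/
lemma sum_proj {𝒜 : Set L} (h𝒜 : MaxAtomFamily 𝒜) {Pa : L → (L →L[ℝ] L)}
    (hPa : ∀ a ∈ 𝒜, IsBandProjection (Pa a) (Submodule.span ℝ {a}))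
    {F : Finset L} (hF : ↑F ⊆ 𝒜) {x : L} (hx : 0 ≤ x) :
    0 ≤ (∑ a ∈ F, Pa a x) ∧ (∑ a ∈ F, Pa a x) ≤ x ∧
      ∀ b : L, 0 ≤ b → (∀ a ∈ F, b ⊓ a = 0) → (∑ a ∈ F, Pa a x) ⊓ b = 0 := by
  induction F using Finset.cons_induction with
  | empty =>
    refine ⟨le_refl _ |>.trans_eq (by simp), by simp [hx], ?_⟩
    intro b hb _
    simp [inf_eq_left.mpr hb]
  | cons c F' hc ih =>
    have hc𝒜 : c ∈ 𝒜 := hF (Finset.mem_coe.mpr (Finset.mem_cons_self c F'))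
    have hF'𝒜 : ↑F' ⊆ 𝒜 := fun a haF =>
      hF (Finset.mem_coe.mpr (Finset.mem_cons_of_mem (Finset.mem_coe.mp haF)))
    obtain ⟨IH1, IH2, IH3⟩ := ih hF'𝒜
    have hatomc := (h𝒜.1 c hc𝒜).1
    obtain ⟨μ, hμ0, hμ⟩ := proj_repr hatomc.1 (hPa c hc𝒜) hx
    have hPc0 : 0 ≤ Pa c x := (hPa c hc𝒜).1 x hx
    have hdisj : (Pa c x) ⊓ (∑ a ∈ F', Pa a x) = 0 := by
      rw [inf_comm]
      refine IH3 (Pa c x) hPc0 ?_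
      intro a haF'
      have ha𝒜 : a ∈ 𝒜 := hF'𝒜 (Finset.mem_coe.mpr haF')
      have hne : c ≠ a := fun h => hc (h ▸ haF')
      have hca : c ⊓ a = 0 := h𝒜.2.1 c hc𝒜 a ha𝒜 hne
      rw [hμ]
      exact inf_smul_zero hatomc.1 (h𝒜.1 a ha𝒜).1.1 hca hμ0
    rw [Finset.sum_cons]
    refine ⟨add_nonneg hPc0 IH1, ?_, ?_⟩
    · have : Pa c x + ∑ a ∈ F', Pa a x = (Pa c x) ⊔ (∑ a ∈ F', Pa a x) := by
        rw [← inf_add_sup, hdisj, zero_add]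
      rw [this]
      exact sup_le (bp_le (hPa c hc𝒜) hx) IH2
    · intro b hb hball
      have h1 : (Pa c x) ⊓ b = 0 := by
        rw [hμ]
        refine inf_smul_zero hatomc.1 hb ?_ hμ0
        rw [inf_comm]
        exact hball c (Finset.mem_cons_self c F')
      have h2 : (∑ a ∈ F', Pa a x) ⊓ b = 0 :=
        IH3 b hb fun a haF' => hball a (Finset.mem_cons_of_mem haF')
      refine le_antisymm ?_ (le_inf (add_nonneg hPc0 IH1) hb)
      calc (Pa c x + ∑ a ∈ F', Pa a x) ⊓ b ≤ (Pa c x) ⊓ b + (∑ a ∈ F', Pa a x) ⊓ b :=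
            add_inf_le' IH1 (le_inf hPc0 hb)
        _ = 0 := by rw [h1, h2, add_zero]

/-- Diagonal compression inequality. -/
lemma diag_le {𝒜 : Set L} (h𝒜 : MaxAtomFamily 𝒜) {Pa : L → (L →L[ℝ] L)}
    (hPa : ∀ a ∈ 𝒜, IsBandProjection (Pa a) (Submodule.span ℝ {a}))
    {F : Finset L} (hF : ↑F ⊆ 𝒜) {R : L →L[ℝ] L} (hR : PositiveOp R)
    {x : L} (hx : 0 ≤ x) :
    (∑ a ∈ F, Pa a (R (Pa a x))) ≤ R x := by
  classical
  set E : L → L := fun y => ∑ a ∈ F, Pa a y with hE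
  have hsp := sum_proj h𝒜 hPa hF hx
  have hEx0 : 0 ≤ E x := hsp.1
  have hExx : E x ≤ x := hsp.2.1
  have hREx0 : 0 ≤ R (E x) := hR _ hEx0
  have hterm : ∀ a ∈ F, Pa a (R (Pa a x)) ≤ Pa a (R (E x)) := by
    intro a haF
    have ha𝒜 : a ∈ 𝒜 := hF (Finset.mem_coe.mpr haF)
    have h1 : Pa a x ≤ E x := by
      rw [hE]
      simp only
      rw [← Finset.add_sum_erase F (fun b => Pa b x) haF]
      exact le_add_of_nonneg_right (Finset.sum_nonneg fun b hb =>
        (hPa b (hF (Finset.mem_coe.mpr (Finset.mem_of_mem_erase hb)))).1 x hx)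
    exact posOp_mono (hPa a ha𝒜).1 (posOp_mono hR h1)
  calc (∑ a ∈ F, Pa a (R (Pa a x))) ≤ ∑ a ∈ F, Pa a (R (E x)) :=
        Finset.sum_le_sum hterm
    _ = E (R (E x)) := rfl
    _ ≤ R (E x) := (sum_proj h𝒜 hPa hF hREx0).2.1
    _ ≤ R x := posOp_mono hR hExx

lemma stepA {𝒜 : Set L} (h𝒜 : MaxAtomFamily 𝒜) {Pa : L → (L →L[ℝ] L)}
    (hPa : ∀ a ∈ 𝒜, IsBandProjection (Pa a) (Submodule.span ℝ {a}))
    {T : L →L[ℝ] L} (hT : PositiveOp T)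
    {F : Finset L} (hF : ↑F ⊆ 𝒜) {S : L →L[ℝ] L} (hS : S ∈ SchepSet T) :
    OpLE (∑ a ∈ F, (Pa a).comp (T.comp (Pa a))) S := by
  classical
  obtain ⟨m, Q, B, hQB, hsum, rfl⟩ := hS
  intro x hx
  have hQpos : ∀ i, PositiveOp (Q i) := fun i => (hQB i).2.1
  have hSpos : 0 ≤ (∑ i, (Q i).comp (T.comp (Q i))) x := by
    rw [ContinuousLinearMap.sum_apply]
    refine Finset.sum_nonneg fun i _ => ?_
    simp only [ContinuousLinearMap.comp_apply]
    exact hQpos i _ (hT _ (hQpos i _ hx))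
  rcases F.eq_empty_or_nonempty with rfl | hFne
  · simpa using hSpos
  · obtain ⟨a₁, ha₁⟩ := hFne
    have hexists : ∀ a ∈ F, ∃ i, Q i a = a := by
      intro a haF
      have hatom := (h𝒜.1 a (hF (Finset.mem_coe.mpr haF))).1
      have hrep : ∀ i, Q i a = a ∨ Q i a = 0 := fun i =>
        atom_comp hatom ((hQB i).2).1 (fun y hy => bp_le ((hQB i).2) hy) ((hQB i).2).2.1
      by_contra hcon
      push_neg at hcon
      have hz : ∀ i, Q i a = 0 := fun i => (hrep i).resolve_left (hcon i)
      have hone : (∑ i, Q i) a = a := by rw [hsum]; rfl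
      rw [ContinuousLinearMap.sum_apply] at hone
      simp only [hz, Finset.sum_const_zero] at hone
      exact hatom.2.1 hone.symm
    have hne : Nonempty (Fin m) := ⟨(hexists a₁ ha₁).choose⟩
    set f : L → Fin m := fun a =>
      if h : ∃ i, Q i a = a then h.choose else Classical.arbitrary _ with hfdef
    have hf : ∀ a ∈ F, Q (f a) a = a := by
      intro a ha
      have h := hexists a ha
      simp only [hfdef, dif_pos h]
      exact h.choose_spec
    have hrw : ∀ i : Fin m, ∀ a ∈ F.filter (fun a => f a = i),
        Pa a (T (Pa a x)) = Pa a (((Q i).comp (T.comp (Q i))) (Pa a x)) := by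
      intro i a hai
      obtain ⟨haF, hfa⟩ := Finset.mem_filter.mp hai
      have hQa : Q i a = a := hfa ▸ hf a haF
      have ha𝒜 : a ∈ 𝒜 := hF (Finset.mem_coe.mpr haF)
      have hatom := (h𝒜.1 a ha𝒜).1
      have h1 : Q i (Pa a x) = Pa a x := by
        obtain ⟨c, hc⟩ := Submodule.mem_span_singleton.mp ((hPa a ha𝒜).2.2.1 x)
        rw [← hc, map_smul, hQa]
      have hmem : a ∈ B i := by rw [← hQa]; exact ((hQB i).2).2.2.1 a
      have h2 : Pa a (Q i (T (Pa a x))) = Pa a (T (Pa a x)) := by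
        set z := T (Pa a x) with hz
        have hdz : |z - Q i z| ⊓ a = 0 := by
          have h' := ((hQB i).2).2.2.2.2 z a hmem
          rwa [abs_of_nonneg hatom.1] at h'
        have h0 : Pa a (z - Q i z) = 0 := bp_ann hatom.1 (hPa a ha𝒜) hdz
        have h3 : Pa a z - Pa a (Q i z) = 0 := by rw [← map_sub, h0]
        exact (sub_eq_zero.mp h3).symm
      calc Pa a (T (Pa a x)) = Pa a (Q i (T (Q i (Pa a x)))) := by rw [h1, h2]
        _ = Pa a (((Q i).comp (T.comp (Q i))) (Pa a x)) := by
            simp [ContinuousLinearMap.comp_apply]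
    calc (∑ a ∈ F, (Pa a).comp (T.comp (Pa a))) x = ∑ a ∈ F, Pa a (T (Pa a x)) := by
          simp [ContinuousLinearMap.sum_apply, ContinuousLinearMap.comp_apply]
      _ = ∑ i : Fin m, ∑ a ∈ F.filter (fun a => f a = i), Pa a (T (Pa a x)) :=
          (Finset.sum_fiberwise F f _).symm
      _ ≤ ∑ i : Fin m, ((Q i).comp (T.comp (Q i))) x := by
          refine Finset.sum_le_sum fun i _ => ?_
          have hsub : ↑(F.filter (fun a => f a = i)) ⊆ 𝒜 := fun a ha =>
            hF (Finset.mem_coe.mpr (Finset.mem_of_mem_filter _ (Finset.mem_coe.mp ha)))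
          have hRpos : PositiveOp ((Q i).comp (T.comp (Q i))) := fun y hy => by
            simp only [ContinuousLinearMap.comp_apply]
            exact hQpos i _ (hT _ (hQpos i _ hy))
          calc ∑ a ∈ F.filter (fun a => f a = i), Pa a (T (Pa a x))
              = ∑ a ∈ F.filter (fun a => f a = i),
                  Pa a (((Q i).comp (T.comp (Q i))) (Pa a x)) :=
                Finset.sum_congr rfl (hrw i)
            _ ≤ ((Q i).comp (T.comp (Q i))) x := diag_le h𝒜 hPa hsub hRpos hx
      _ = (∑ i, (Q i).comp (T.comp (Q i))) x := (ContinuousLinearMap.sum_apply _ _ _).symm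

end BP

theorem stmt5 {L : Type*} [NormedAddCommGroup L] [Lattice L] [HasSolidNorm L] [IsOrderedAddMonoid L] [NormedSpace ℝ L]
    [CompleteSpace L] (hdc : DedekindComplete L)
    (A : Submodule ℝ L) (hA : IsAtomicBand A)
    (PA : L →L[ℝ] L) (hPA : IsBandProjection PA A)
    (𝒜 : Set L) (h𝒜 : MaxAtomFamily 𝒜)
    (Pa : L → (L →L[ℝ] L)) (hPa : ∀ a ∈ 𝒜, IsBandProjection (Pa a) (Submodule.span ℝ {a}))
    (T : L →L[ℝ] L) (hT : PositiveOp T)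
    (D : L →L[ℝ] L) (hD : AtomicDiagOf 𝒜 Pa T D)
    (PT : L →L[ℝ] L) (hPT : CentralPartOf T PT) :
    D = PA.comp PT := by
  classical
  have hatom : ∀ a ∈ 𝒜, IsLatAtom a := fun a ha => (h𝒜.1 a ha).1
  have hspanA : ∀ a ∈ 𝒜, Submodule.span ℝ ({a} : Set L) ≤ A := fun a ha =>
    Submodule.span_le.mpr (by simpa using hA.2.1 a (hatom a ha))
  -- Direction 1 : D ≤ PA ∘ PT
  have hDir1 : OpLE D (PA.comp PT) := by
    refine hD.2 (PA.comp PT) ?_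
    intro F hF x hx
    have hsum_pos : PositiveOp (∑ a ∈ F, (Pa a).comp (T.comp (Pa a))) :=
      posOp_sum hT (fun a ha => (hPa a (hF (Finset.mem_coe.mpr ha))).1)
    have hle : OpLE (∑ a ∈ F, (Pa a).comp (T.comp (Pa a))) PT :=
      hPT.2.2 _ hsum_pos (fun S hS => stepA h𝒜 hPa hT hF hS)
    have h1 : (∑ a ∈ F, (Pa a).comp (T.comp (Pa a))) x ≤ PT x := hle x hx
    have hmemA : (∑ a ∈ F, (Pa a).comp (T.comp (Pa a))) x ∈ A := by
      rw [ContinuousLinearMap.sum_apply]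
      refine Submodule.sum_mem A fun a ha => ?_
      have ha𝒜 : a ∈ 𝒜 := hF (Finset.mem_coe.mpr ha)
      have hmem : Pa a (T (Pa a x)) ∈ Submodule.span ℝ ({a} : Set L) :=
        (hPa a ha𝒜).2.2.1 _
      simpa [ContinuousLinearMap.comp_apply] using hspanA a ha𝒜 hmem
    have h2 : PA ((∑ a ∈ F, (Pa a).comp (T.comp (Pa a))) x)
        = (∑ a ∈ F, (Pa a).comp (T.comp (Pa a))) x := hPA.2.2.2.1 _ hmemA
    calc (∑ a ∈ F, (Pa a).comp (T.comp (Pa a))) x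
        = PA ((∑ a ∈ F, (Pa a).comp (T.comp (Pa a))) x) := h2.symm
      _ ≤ PA (PT x) := posOp_mono hPA.1 h1
      _ = (PA.comp PT) x := (ContinuousLinearMap.comp_apply _ _ _).symm
  -- Direction 2 : PA ∘ PT ≤ D
  have hDir2 : ∀ x : L, 0 ≤ x → PA (PT x) ≤ D x := by
    intro x hx
    rcases Set.eq_empty_or_nonempty 𝒜 with hemp | hne𝒜
    · have hnoatom : ∀ c : L, ¬ IsLatAtom c := by
        intro c hc
        obtain ⟨a, ha, -⟩ := h𝒜.2.2 c hc
        rw [hemp] at ha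
        exact Set.notMem_empty a ha
      have hbot : IsBand (⊥ : Submodule ℝ L) := by
        constructor
        · intro u v huv hv
          rw [Submodule.mem_bot] at hv ⊢
          rw [hv, abs_zero] at huv
          exact abs_eq_zero'' (le_antisymm huv (abs_nonneg u))
        · intro A' hne hsub z hz
          rw [Submodule.mem_bot]
          have hall : ∀ y ∈ A', y = (0:L) := fun y hy => (Submodule.mem_bot ℝ).mp (hsub hy)
          obtain ⟨y0, hy0⟩ := hne
          refine le_antisymm (hz.2 fun y hy => (hall y hy).le) ?_
          have := hz.1 hy0
          rwa [hall y0 hy0] at this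
      have hAbot : A ≤ ⊥ := hA.2.2 ⊥ hbot (fun c hc => absurd hc (hnoatom c))
      have hPA0 : PA (PT x) = 0 := (Submodule.mem_bot ℝ).mp (hAbot (hPA.2.2.1 (PT x)))
      rw [hPA0]
      have h0 := hD.1 ∅ (by simp) x hx
      simpa using h0
    · obtain ⟨a₀, ha₀⟩ := hne𝒜
      set δ := PA (PT x) - D x with hδ
      have key : ∀ a ∈ 𝒜, Pa a δ⁺ = 0 ∧ δ⁺ ≤ PA ((1 - Pa a) (T ((1 - Pa a) x))) := by
        intro a ha
        have hbp := hPa a ha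
        have haat := hatom a ha
        have hS : (Pa a).comp (T.comp (Pa a)) + (1 - Pa a).comp (T.comp (1 - Pa a))
            ∈ SchepSet T := schep_mem haat hbp T
        have h1 : PT x ≤ ((Pa a).comp (T.comp (Pa a))
            + (1 - Pa a).comp (T.comp (1 - Pa a)) : L →L[ℝ] L) x := hPT.2.1 _ hS x hx
        have h2 : PA (PT x) ≤ PA (Pa a (T (Pa a x)))
            + PA ((1 - Pa a) (T ((1 - Pa a) x))) := by
          have hm := posOp_mono hPA.1 h1
          rw [ContinuousLinearMap.add_apply, map_add] at hm
          simpa only [ContinuousLinearMap.comp_apply] using hm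
        have hmem1 : Pa a (T (Pa a x)) ∈ A := hspanA a ha (hbp.2.2.1 _)
        have h3 : PA (Pa a (T (Pa a x))) = Pa a (T (Pa a x)) := hPA.2.2.2.1 _ hmem1
        have h4 : Pa a (T (Pa a x)) ≤ D x := by
          have h4' := hD.1 {a} (by simpa using ha) x hx
          simpa [ContinuousLinearMap.comp_apply] using h4'
        have hQpos : PositiveOp (1 - Pa a) := (bp_compl haat hbp).1
        have hr0 : 0 ≤ PA ((1 - Pa a) (T ((1 - Pa a) x))) :=
          hPA.1 _ (hQpos _ (hT _ (hQpos _ hx)))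
        have hδr : δ ≤ PA ((1 - Pa a) (T ((1 - Pa a) x))) := by
          rw [h3] at h2
          have h5 : PA (PT x) ≤ D x + PA ((1 - Pa a) (T ((1 - Pa a) x))) :=
            h2.trans (add_le_add_left h4 _)
          rw [hδ]
          exact sub_le_iff_le_add'.mpr h5
        have hwr : δ⁺ ≤ PA ((1 - Pa a) (T ((1 - Pa a) x))) := by
          rw [posPart_def]
          exact sup_le hδr hr0
        have hPaw_le : Pa a δ⁺ ≤ Pa a (PA ((1 - Pa a) (T ((1 - Pa a) x)))) :=
          posOp_mono hbp.1 hwr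
        set y := (1 - Pa a) (T ((1 - Pa a) x)) with hy
        have hyd : |y - PA y| ⊓ a = 0 := by
          have h6 := hPA.2.2.2.2 y a (hA.2.1 a haat)
          rwa [abs_of_nonneg haat.1] at h6
        have hPAy : Pa a (y - PA y) = 0 := bp_ann haat.1 hbp hyd
        have hPar : Pa a (PA y) = Pa a y := by
          have h7 : Pa a y - Pa a (PA y) = 0 := by rw [← map_sub, hPAy]
          exact (sub_eq_zero.mp h7).symm
        have hz0 : ∀ z : L, Pa a ((1 - Pa a) z) = 0 := by
          intro z
          simp only [ContinuousLinearMap.sub_apply, ContinuousLinearMap.one_apply, map_sub]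
          rw [bp_apply_eq hbp, sub_self]
        have hPay : Pa a y = 0 := by
          rw [hy]
          exact hz0 _
        have hPaw0 : Pa a δ⁺ = 0 := by
          refine le_antisymm ?_ (hbp.1 _ (posPart_nonneg δ))
          rw [hPar, hPay] at hPaw_le
          exact hPaw_le
        exact ⟨hPaw0, hwr⟩
      have hwd : δ⁺ ∈ dSet 𝒜 := by
        intro s hs
        have h0 := (key s hs).1
        have h1 := (hPa s hs).2.2.2.2 δ⁺ s (Submodule.mem_span_singleton_self s)
        rwa [h0, sub_zero] at h1
      have hwA : δ⁺ ∈ A := by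
        obtain ⟨-, hwr⟩ := key a₀ ha₀
        have hQpos : PositiveOp (1 - Pa a₀) := (bp_compl (hatom a₀ ha₀) (hPa a₀ ha₀)).1
        have hr0 : 0 ≤ PA ((1 - Pa a₀) (T ((1 - Pa a₀) x))) :=
          hPA.1 _ (hQpos _ (hT _ (hQpos _ hx)))
        refine hA.1.1 δ⁺ (PA ((1 - Pa a₀) (T ((1 - Pa a₀) x)))) ?_ (hPA.2.2.1 _)
        rw [abs_of_nonneg (posPart_nonneg δ), abs_of_nonneg hr0]
        exact hwr
      have hAdd : A ≤ dSet (↑(dSet 𝒜) : Set L) := by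
        refine hA.2.2 _ (dSet_isBand _) ?_
        intro c hc s hs
        obtain ⟨a, ha𝒜, hca⟩ := h𝒜.2.2 c hc
        have hatoma := hatom a ha𝒜
        have hca0 : 0 ≤ c ⊓ a := le_inf hc.1 hatoma.1
        obtain ⟨μ, hμ0, hμ⟩ := hatoma.2.2 (c ⊓ a) hca0 inf_le_right
        obtain ⟨lam, hlam0, hlam⟩ := hc.2.2 (c ⊓ a) hca0 inf_le_left
        have hlamne : lam ≠ 0 := fun h => hca (by rw [hlam, h, zero_smul])
        have hceq : c = (lam⁻¹ * μ) • a := by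
          have h8 : lam • c = μ • a := by rw [← hlam, ← hμ]
          calc c = lam⁻¹ • (lam • c) := (inv_smul_smul₀ hlamne c).symm
            _ = lam⁻¹ • (μ • a) := by rw [h8]
            _ = (lam⁻¹ * μ) • a := smul_smul _ _ _
        have hsa : a ⊓ |s| = 0 := by
          have h9 := hs a ha𝒜
          rw [abs_of_nonneg hatoma.1] at h9
          rw [inf_comm]
          exact h9
        rw [abs_of_nonneg hc.1, hceq]
        exact inf_smul_zero hatoma.1 (abs_nonneg s) hsa
          (mul_nonneg (inv_nonneg.mpr hlam0) hμ0)
      have hww : |δ⁺| ⊓ |δ⁺| = 0 := hAdd hwA δ⁺ hwd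
      rw [inf_idem] at hww
      have hw0 : δ⁺ = 0 := abs_eq_zero'' hww
      have hδ0 : δ ≤ 0 := posPart_eq_zero.mp hw0
      rw [hδ] at hδ0
      exact sub_nonpos.mp hδ0
  have heq : ∀ x : L, 0 ≤ x → D x = (PA.comp PT) x := fun x hx =>
    le_antisymm (hDir1 x hx)
      (by simpa [ContinuousLinearMap.comp_apply] using hDir2 x hx)
  ext x
  calc D x = D x⁺ - D x⁻ := by rw [← map_sub, posPart_sub_negPart]
    _ = (PA.comp PT) x⁺ - (PA.comp PT) x⁻ := by
        rw [heq _ (posPart_nonneg x), heq _ (negPart_nonneg x)]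
    _ = (PA.comp PT) x := by rw [← map_sub, posPart_sub_negPart]
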